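/- (L^p stability of the averaging interpolant.) Let d ≥ 1, N ∈ ℕ with N ≥ 2, h = 1/N, Ω = (0,1)^d, and let Π_h be the averaging interpolant Π_h w(x) = Σ_{k ∈ {1,…,N−1}^d} W_k(w) Λ_k(x), where Λ_k(x) = Π_{i=1}^d max(0, 1 − |x_i/h − k_i|) and W_k(w) = ⨍_{hk + (−h/2, h/2)^d} w dx. Then for every p ∈ [1,∞) there is a constant C, depending only on d and p (in particular independent of h and w), such that ∫_Ω |Π_h w|^p dx ≤ C ∫_Ω |w|^p dx for all w ∈ L^p(Ω). -/

import Mathlib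

open MeasureTheory

/-- One-dimensional hat function with node `j h`: `λ_j(t) = max(0, 1 − |t/h − j|)`. -/
noncomputable def hatFn (h : ℝ) (j : ℕ) (t : ℝ) : ℝ := max 0 (1 - |t / h - (j : ℝ)|)

/-- Tensor-product hat function `Λ_k(x) = Π_i λ_{k_i}(x_i)`. -/
noncomputable def LamFn (d : ℕ) (h : ℝ) (k : Fin d → ℕ) (x : Fin d → ℝ) : ℝ :=
  ∏ i, hatFn h (k i) (x i)

/-- The open cube `h k + (−h/2, h/2)^d` centered at the node `h k`. -/
def nodeCube (d : ℕ) (h : ℝ) (k : Fin d → ℕ) : Set (Fin d → ℝ) :=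
  {x | ∀ i, |x i - h * (k i : ℝ)| < h / 2}

/-- Nodal value `W_k(w) = ⨍_{h k + (−h/2,h/2)^d} w dx`. -/
noncomputable def nodalW (d : ℕ) (h : ℝ) (k : Fin d → ℕ) (w : (Fin d → ℝ) → ℝ) : ℝ :=
  ⨍ x in nodeCube d h k, w x

/-- The averaging interpolant
`Π_h w (x) = Σ_{k ∈ {1,…,N−1}^d} W_k(w) Λ_k(x)` with `h = 1/N`. -/
noncomputable def interpQ (d N : ℕ) (w : (Fin d → ℝ) → ℝ) (x : Fin d → ℝ) : ℝ :=
  ∑ k ∈ Finset.Icc (fun _ => 1) (fun _ => N - 1),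
    nodalW d ((N : ℝ)⁻¹) k w * LamFn d ((N : ℝ)⁻¹) k x

/-- The open unit cube `Ω = (0,1)^d`. -/
def unitCube (d : ℕ) : Set (Fin d → ℝ) := {x | ∀ i, 0 < x i ∧ x i < 1}

/-! ### Auxiliary lemmas -/

section Aux

open Set

lemma aux_max_add_max {A B : ℝ} (hA : A ≤ 1) (hB : B ≤ 1) (hAB : A + B ≤ 1) :
    max 0 A + max 0 B ≤ 1 := by
  rcases max_cases 0 A with ⟨h1, h2⟩ | ⟨h1, h2⟩ <;>
    rcases max_cases 0 B with ⟨h3, h4⟩ | ⟨h3, h4⟩ <;> linarith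

lemma aux_hat_sum (s : ℝ) (S : Finset ℕ) :
    ∑ j ∈ S, max 0 (1 - |s - (j : ℝ)|) ≤ 1 := by
  set m : ℤ := ⌊s⌋ with hm
  set a : ℕ := m.toNat with ha
  have key : ∀ j ∈ S, max 0 (1 - |s - (j : ℝ)|) ≠ 0 → j ∈ ({a, a + 1} : Finset ℕ) := by
    intro j _ hj
    have h1 : 0 < 1 - |s - (j : ℝ)| := by
      by_contra h
      exact hj (max_eq_left (not_lt.mp h))
    have habs : |s - (j : ℝ)| < 1 := by linarith
    rw [abs_lt] at habs
    have hfl : (m : ℝ) ≤ s := Int.floor_le s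
    have hfl2 : s < (m : ℝ) + 1 := Int.lt_floor_add_one s
    have hj1 : m - 1 < (j : ℤ) := by exact_mod_cast (by linarith : ((m : ℝ) - 1) < (j : ℝ))
    have hj2 : (j : ℤ) < m + 2 := by exact_mod_cast (by linarith : ((j : ℝ)) < (m : ℝ) + 2)
    simp only [Finset.mem_insert, Finset.mem_singleton]
    omega
  calc ∑ j ∈ S, max 0 (1 - |s - (j : ℝ)|)
      = ∑ j ∈ S.filter (· ∈ ({a, a + 1} : Finset ℕ)), max 0 (1 - |s - (j : ℝ)|) :=
        (Finset.sum_filter_of_ne key).symm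
    _ ≤ ∑ j ∈ ({a, a + 1} : Finset ℕ), max 0 (1 - |s - (j : ℝ)|) := by
        apply Finset.sum_le_sum_of_subset_of_nonneg
        · intro j hjm
          exact (Finset.mem_filter.mp hjm).2
        · intro j _ _; exact le_max_left _ _
    _ = max 0 (1 - |s - (a : ℝ)|) + max 0 (1 - |s - ((a : ℝ) + 1)|) := by
        rw [Finset.sum_insert (by simp), Finset.sum_singleton]; push_cast; ring_nf
    _ ≤ 1 := by
        apply aux_max_add_max
        · have := abs_nonneg (s - (a : ℝ)); linarith
        · have := abs_nonneg (s - ((a : ℝ) + 1)); linarith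
        · have h3 : (1 : ℝ) ≤ |s - (a : ℝ)| + |s - ((a : ℝ) + 1)| := by
            have := abs_sub (s - (a : ℝ)) (s - ((a : ℝ) + 1))
            have h4 : |(s - (a : ℝ)) - (s - ((a : ℝ) + 1))| = 1 := by
              norm_num
            rw [h4] at this
            linarith
          linarith

lemma aux_jensen_wt {ι : Type*} (s : Finset ι) (w z : ι → ℝ) (p : ℝ) (hp : 1 ≤ p)
    (hw : ∀ i ∈ s, 0 ≤ w i) (hz : ∀ i ∈ s, 0 ≤ z i) (hsum : ∑ i ∈ s, w i ≤ 1) :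
    (∑ i ∈ s, w i * z i) ^ p ≤ ∑ i ∈ s, w i * z i ^ p := by
  set T : ℝ := ∑ i ∈ s, w i with hT
  have hT0 : 0 ≤ T := Finset.sum_nonneg hw
  rcases eq_or_lt_of_le hT0 with h0 | h0
  · have hz0 : ∀ i ∈ s, w i = 0 := by
      intro i hi
      exact le_antisymm (by
        have := Finset.single_le_sum hw hi
        linarith [this]) (hw i hi)
    have e1 : ∑ i ∈ s, w i * z i = 0 := Finset.sum_eq_zero fun i hi => by rw [hz0 i hi, zero_mul]
    have e2 : ∑ i ∈ s, w i * z i ^ p = 0 := Finset.sum_eq_zero fun i hi => by rw [hz0 i hi, zero_mul]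
    rw [e1, e2, Real.zero_rpow (by linarith : p ≠ 0)]
  · have hmain := Real.rpow_arith_mean_le_arith_mean_rpow s (fun i => w i / T) z
      (fun i hi => div_nonneg (hw i hi) hT0) (by
        rw [← Finset.sum_div, ← hT, div_self (ne_of_gt h0)]) hz hp
    have key : (∑ i ∈ s, (w i / T) * z i) = T⁻¹ * ∑ i ∈ s, w i * z i := by
      rw [Finset.mul_sum]; congr 1; ext i; ring
    have key2 : (∑ i ∈ s, (w i / T) * z i ^ p) = T⁻¹ * ∑ i ∈ s, w i * z i ^ p := by
      rw [Finset.mul_sum]; congr 1; ext i; ring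
    rw [key, key2] at hmain
    have hS0 : 0 ≤ ∑ i ∈ s, w i * z i :=
      Finset.sum_nonneg fun i hi => mul_nonneg (hw i hi) (hz i hi)
    have hrw : (T⁻¹ * ∑ i ∈ s, w i * z i) ^ p = T⁻¹ ^ p * (∑ i ∈ s, w i * z i) ^ p :=
      Real.mul_rpow (by positivity) hS0
    rw [hrw] at hmain
    have hTp : T ^ p * T⁻¹ ^ p = 1 := by
      rw [← Real.mul_rpow hT0 (by positivity), mul_inv_cancel₀ (ne_of_gt h0), Real.one_rpow]
    have h2 : (∑ i ∈ s, w i * z i) ^ p = T ^ p * (T⁻¹ ^ p * (∑ i ∈ s, w i * z i) ^ p) := by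
      rw [← mul_assoc, hTp, one_mul]
    rw [h2]
    calc T ^ p * (T⁻¹ ^ p * (∑ i ∈ s, w i * z i) ^ p)
        ≤ T ^ p * (T⁻¹ * ∑ i ∈ s, w i * z i ^ p) := by
          apply mul_le_mul_of_nonneg_left hmain (Real.rpow_nonneg hT0 p)
      _ = T ^ (p - 1) * ∑ i ∈ s, w i * z i ^ p := by
          rw [← mul_assoc]; congr 1
          rw [← Real.rpow_neg_one T, ← Real.rpow_add h0]
          ring_nf
      _ ≤ 1 * ∑ i ∈ s, w i * z i ^ p := by
          apply mul_le_mul_of_nonneg_right _ (Finset.sum_nonneg fun i hi =>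
            mul_nonneg (hw i hi) (Real.rpow_nonneg (hz i hi) p))
          exact Real.rpow_le_one hT0 hsum (by linarith)
      _ = _ := one_mul _

lemma hatFn_nonneg (h : ℝ) (j : ℕ) (t : ℝ) : 0 ≤ hatFn h j t := le_max_left _ _

lemma hatFn_le_one (h : ℝ) (j : ℕ) (t : ℝ) : hatFn h j t ≤ 1 := by
  unfold hatFn
  apply max_le zero_le_one
  have := abs_nonneg (t / h - (j:ℝ)); linarith

lemma LamFn_nonneg (d : ℕ) (h : ℝ) (k : Fin d → ℕ) (x : Fin d → ℝ) : 0 ≤ LamFn d h k x :=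
  Finset.prod_nonneg fun _ _ => hatFn_nonneg _ _ _

lemma LamFn_le_one (d : ℕ) (h : ℝ) (k : Fin d → ℕ) (x : Fin d → ℝ) : LamFn d h k x ≤ 1 :=
  Finset.prod_le_one (fun _ _ => hatFn_nonneg _ _ _) (fun _ _ => hatFn_le_one _ _ _)

lemma hatFn_continuous (h : ℝ) (j : ℕ) : Continuous (hatFn h j) := by
  unfold hatFn
  fun_prop

lemma LamFn_continuous (d : ℕ) (h : ℝ) (k : Fin d → ℕ) : Continuous (LamFn d h k) := by
  unfold LamFn
  exact continuous_finset_prod _ fun i _ => (hatFn_continuous h (k i)).comp (continuous_apply i)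

lemma aux_Icc_pi (d a b : ℕ) :
    Finset.Icc (fun _ : Fin d => a) (fun _ => b) =
      Fintype.piFinset (fun _ : Fin d => Finset.Icc a b) := by
  ext k
  simp [Finset.mem_Icc, Fintype.mem_piFinset, Pi.le_def, forall_and]

lemma aux_Lam_sum (d N : ℕ) (x : Fin d → ℝ) :
    ∑ k ∈ Finset.Icc (fun _ : Fin d => 1) (fun _ => N - 1), LamFn d ((N : ℝ)⁻¹) k x ≤ 1 := by
  rw [aux_Icc_pi]
  have hfact : ∑ k ∈ Fintype.piFinset (fun _ : Fin d => Finset.Icc 1 (N - 1)),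
      LamFn d ((N : ℝ)⁻¹) k x = ∏ i, ∑ j ∈ Finset.Icc 1 (N - 1), hatFn ((N : ℝ)⁻¹) j (x i) := by
    rw [Finset.prod_univ_sum]
    rfl
  rw [hfact]
  apply Finset.prod_le_one
  · intro i _
    exact Finset.sum_nonneg fun j _ => hatFn_nonneg _ _ _
  · intro i _
    have := aux_hat_sum (x i * N) (Finset.Icc 1 (N - 1))
    refine le_trans (le_of_eq ?_) this
    apply Finset.sum_congr rfl
    intro j _
    unfold hatFn
    rw [div_inv_eq_mul]

lemma aux_avg_jensen {α : Type*} [MeasureSpace α] {U : Set α}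
    (hU0 : volume U ≠ 0) (hU : volume U ≠ ⊤) {w : α → ℝ} (p : ℝ) (hp : 1 ≤ p)
    (hw : IntegrableOn w U) (hwp : IntegrableOn (fun x => |w x| ^ p) U) :
    |⨍ x in U, w x| ^ p ≤ (volume U).toReal⁻¹ * ∫ x in U, |w x| ^ p := by
  have hp0 : 0 ≤ p := le_trans zero_le_one hp
  have h1 : |⨍ x in U, w x| ≤ ⨍ x in U, |w x| := by
    rw [setAverage_eq, setAverage_eq, smul_eq_mul, smul_eq_mul, abs_mul,
      abs_of_nonneg (inv_nonneg.mpr measureReal_nonneg)]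
    apply mul_le_mul_of_nonneg_left _ (inv_nonneg.mpr measureReal_nonneg)
    calc |∫ x in U, w x| = ‖∫ x in U, w x‖ := (Real.norm_eq_abs _).symm
      _ ≤ ∫ x in U, ‖w x‖ := norm_integral_le_integral_norm _
      _ = ∫ x in U, |w x| := by simp [Real.norm_eq_abs]
  have h2 : (⨍ x in U, |w x|) ^ p ≤ ⨍ x in U, |w x| ^ p := by
    have := (convexOn_rpow hp).map_set_average_le
      (Real.continuous_rpow_const hp0).continuousOn isClosed_Ici hU0 hU
      (Filter.Eventually.of_forall fun x => abs_nonneg (w x)) hw.abs hwp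
    exact this
  have h3 : |⨍ x in U, w x| ^ p ≤ (⨍ x in U, |w x|) ^ p :=
    Real.rpow_le_rpow (abs_nonneg _) h1 hp0
  calc |⨍ x in U, w x| ^ p ≤ ⨍ x in U, |w x| ^ p := le_trans h3 h2
    _ = (volume U).toReal⁻¹ * ∫ x in U, |w x| ^ p := by rw [setAverage_eq, smul_eq_mul, measureReal_def]

lemma nodeCube_eq (d : ℕ) (H : ℝ) (k : Fin d → ℕ) :
    nodeCube d H k = Set.pi univ (fun i => Ioo (H * k i - H/2) (H * k i + H/2)) := by
  ext x
  simp only [nodeCube, mem_setOf_eq, Set.mem_pi, mem_univ, forall_true_left, mem_Ioo, abs_lt]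
  constructor <;> intro h i <;> have := h i <;> constructor <;> [skip; skip; skip; skip] <;>
    linarith [this.1, this.2]

lemma nodeCube_meas (d : ℕ) (H : ℝ) (k : Fin d → ℕ) : MeasurableSet (nodeCube d H k) := by
  rw [nodeCube_eq]
  exact MeasurableSet.univ_pi fun i => measurableSet_Ioo

lemma nodeCube_vol (d : ℕ) (H : ℝ) (hH : 0 < H) (k : Fin d → ℕ) :
    volume (nodeCube d H k) = ENNReal.ofReal H ^ d := by
  rw [nodeCube_eq, volume_pi_pi]
  have : ∀ i : Fin d, volume (Ioo (H * k i - H/2) (H * k i + H/2)) = ENNReal.ofReal H := by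
    intro i; rw [Real.volume_Ioo]; congr 1; ring
  simp [this]

lemma unitCube_meas (d : ℕ) : MeasurableSet (unitCube d) := by
  have : unitCube d = Set.pi univ (fun _ : Fin d => Ioo (0:ℝ) 1) := by
    ext x; simp [unitCube, Set.mem_pi]
  rw [this]
  exact MeasurableSet.univ_pi fun i => measurableSet_Ioo

lemma unitCube_vol (d : ℕ) : volume (unitCube d) = 1 := by
  have : unitCube d = Set.pi univ (fun _ : Fin d => Ioo (0:ℝ) 1) := by
    ext x; simp [unitCube, Set.mem_pi]
  rw [this, volume_pi_pi]
  simp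

lemma nodeCube_subset (d N : ℕ) (hN : 2 ≤ N) (k : Fin d → ℕ)
    (hk : k ∈ Finset.Icc (fun _ : Fin d => 1) (fun _ => N - 1)) :
    nodeCube d ((N : ℝ)⁻¹) k ⊆ unitCube d := by
  rw [Finset.mem_Icc] at hk
  intro x hx i
  have h1 : (1 : ℕ) ≤ k i := hk.1 i
  have h2 : k i ≤ N - 1 := hk.2 i
  have hxi := hx i
  rw [abs_lt] at hxi
  have hN0 : (0:ℝ) < N := by positivity
  have hk1 : (1:ℝ) ≤ (k i : ℝ) := by exact_mod_cast h1
  have hk2 : (k i : ℝ) ≤ (N:ℝ) - 1 := by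
    have : (k i : ℝ) ≤ ((N - 1 : ℕ) : ℝ) := by exact_mod_cast h2
    rw [Nat.cast_sub (by omega)] at this; simpa using this
  constructor
  · have : (N:ℝ)⁻¹ * 1 ≤ (N:ℝ)⁻¹ * k i := by nlinarith
    nlinarith [hxi.1]
  · have : (N:ℝ)⁻¹ * (k i : ℝ) ≤ (N:ℝ)⁻¹ * ((N:ℝ) - 1) := by nlinarith
    have h4 : (N:ℝ)⁻¹ * (N:ℝ) = 1 := by field_simp
    nlinarith [hxi.2]

lemma nodeCube_disj (d N : ℕ) {k k' : Fin d → ℕ} (hkk : k ≠ k') :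
    Disjoint (nodeCube d ((N : ℝ)⁻¹) k) (nodeCube d ((N : ℝ)⁻¹) k') := by
  rw [Set.disjoint_left]
  intro x hx hx'
  apply hkk
  funext i
  have h1 := hx i
  have h2 := hx' i
  rw [abs_lt] at h1 h2
  have : |(k i : ℝ) - (k' i : ℝ)| < 1 := by
    rcases Nat.eq_zero_or_pos N with h | h
    · subst h
      simp only [Nat.cast_zero, inv_zero] at h1 h2
      rw [abs_lt]
      constructor <;> nlinarith [h1.1, h1.2, h2.1, h2.2]
    · have hN0 : (0:ℝ) < N := by positivity
      have hH0 : (0:ℝ) < (N:ℝ)⁻¹ := by positivity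
      have hd1 : |x i - (N:ℝ)⁻¹ * k i| < (N:ℝ)⁻¹ / 2 := by rw [abs_lt]; exact h1
      have hd2 : |x i - (N:ℝ)⁻¹ * k' i| < (N:ℝ)⁻¹ / 2 := by rw [abs_lt]; exact h2
      have htri : |(N:ℝ)⁻¹ * k i - (N:ℝ)⁻¹ * k' i| < (N:ℝ)⁻¹ := by
        calc |(N:ℝ)⁻¹ * k i - (N:ℝ)⁻¹ * k' i|
            ≤ |x i - (N:ℝ)⁻¹ * k' i| + |x i - (N:ℝ)⁻¹ * k i| := by
              rw [abs_sub_comm (x i) ((N:ℝ)⁻¹ * k i)]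
              calc |(N:ℝ)⁻¹ * k i - (N:ℝ)⁻¹ * k' i|
                  = |((N:ℝ)⁻¹ * k i - x i) + (x i - (N:ℝ)⁻¹ * k' i)| := by ring_nf
                _ ≤ |(N:ℝ)⁻¹ * k i - x i| + |x i - (N:ℝ)⁻¹ * k' i| := abs_add_le _ _
                _ = |x i - (N:ℝ)⁻¹ * k' i| + |(N:ℝ)⁻¹ * k i - x i| := by ring
          _ < (N:ℝ)⁻¹ := by linarith
      have : (N:ℝ)⁻¹ * |(k i : ℝ) - (k' i : ℝ)| < (N:ℝ)⁻¹ := by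
        calc (N:ℝ)⁻¹ * |(k i : ℝ) - (k' i : ℝ)| = |(N:ℝ)⁻¹ * ((k i : ℝ) - (k' i : ℝ))| := by
              rw [abs_mul, abs_of_pos hH0]
          _ = |(N:ℝ)⁻¹ * k i - (N:ℝ)⁻¹ * k' i| := by ring_nf
          _ < (N:ℝ)⁻¹ := htri
      nlinarith [abs_nonneg ((k i : ℝ) - (k' i : ℝ))]
  rw [abs_lt] at this
  have ha : (-1 : ℤ) < (k i : ℤ) - (k' i : ℤ) := by
    exact_mod_cast (by push_cast; linarith [this.1] : (-1:ℝ) < ((k i : ℤ) : ℝ) - ((k' i : ℤ) : ℝ))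
  have hb : (k i : ℤ) - (k' i : ℤ) < 1 := by
    exact_mod_cast (by push_cast; linarith [this.2] : ((k i : ℤ) : ℝ) - ((k' i : ℤ) : ℝ) < 1)
  omega

def nodeBox (d N : ℕ) (k : Fin d → ℕ) : Set (Fin d → ℝ) :=
  Set.pi univ (fun i => Ioo (((k i : ℝ) - 1) * (N:ℝ)⁻¹) (((k i : ℝ) + 1) * (N:ℝ)⁻¹))

lemma nodeBox_meas (d N : ℕ) (k : Fin d → ℕ) : MeasurableSet (nodeBox d N k) :=
  MeasurableSet.univ_pi fun _ => measurableSet_Ioo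

lemma nodeBox_vol (d N : ℕ) (k : Fin d → ℕ) :
    volume (nodeBox d N k) = ENNReal.ofReal (2 * (N:ℝ)⁻¹) ^ d := by
  rw [nodeBox, volume_pi_pi]
  have : ∀ i : Fin d, volume (Ioo (((k i : ℝ) - 1) * (N:ℝ)⁻¹) (((k i : ℝ) + 1) * (N:ℝ)⁻¹))
      = ENNReal.ofReal (2 * (N:ℝ)⁻¹) := by
    intro i; rw [Real.volume_Ioo]; congr 1; ring
  simp [this]

lemma LamFn_le_indicator (d N : ℕ) (hN : 1 ≤ N) (k : Fin d → ℕ) (x : Fin d → ℝ) :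
    LamFn d ((N:ℝ)⁻¹) k x ≤ (nodeBox d N k).indicator (fun _ => (1:ℝ)) x := by
  by_cases hx : x ∈ nodeBox d N k
  · rw [indicator_of_mem hx]
    exact LamFn_le_one _ _ _ _
  · rw [indicator_of_notMem hx]
    have : ∃ i : Fin d, x i ∉ Ioo (((k i : ℝ) - 1) * (N:ℝ)⁻¹) (((k i : ℝ) + 1) * (N:ℝ)⁻¹) := by
      by_contra h
      push_neg at h
      exact hx fun i _ => h i
    obtain ⟨i, hi⟩ := this
    have hz : hatFn ((N:ℝ)⁻¹) (k i) (x i) = 0 := by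
      unfold hatFn
      rw [div_inv_eq_mul]
      apply max_eq_left
      rw [mem_Ioo, not_and_or] at hi
      have hN0 : (0:ℝ) < N := by positivity
      rcases hi with hi | hi
      · push_neg at hi
        have : x i * N ≤ (k i : ℝ) - 1 := by
          have := mul_le_mul_of_nonneg_right hi (le_of_lt hN0)
          calc x i * (N:ℝ) ≤ ((k i : ℝ) - 1) * (N:ℝ)⁻¹ * N := this
            _ = (k i : ℝ) - 1 := by field_simp
        have habs : 1 ≤ |x i * N - (k i : ℝ)| := by
          rw [abs_sub_comm, le_abs]; left; linarith
        rw [abs_sub_comm] at habs ⊢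
        linarith
      · push_neg at hi
        have : (k i : ℝ) + 1 ≤ x i * N := by
          have := mul_le_mul_of_nonneg_right hi (le_of_lt hN0)
          calc (k i : ℝ) + 1 = ((k i : ℝ) + 1) * (N:ℝ)⁻¹ * N := by field_simp
            _ ≤ x i * N := this
        have habs : 1 ≤ |x i * N - (k i : ℝ)| := by
          rw [le_abs]; left; linarith
        linarith
    rw [LamFn, Finset.prod_eq_zero (Finset.mem_univ i) hz]

lemma aux_finite (d : ℕ) : IsFiniteMeasure (volume.restrict (unitCube d)) := by
  constructor
  rw [Measure.restrict_apply_univ, unitCube_vol]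
  exact ENNReal.one_lt_top

lemma aux_int_Lam (d N : ℕ) (hN : 1 ≤ N) (k : Fin d → ℕ) :
    ∫ x in unitCube d, LamFn d ((N:ℝ)⁻¹) k x ≤ (2 * (N:ℝ)⁻¹) ^ d := by
  have hfin : IsFiniteMeasure (volume.restrict (unitCube d)) := aux_finite d
  have hind : Integrable ((nodeBox d N k).indicator (fun _ => (1:ℝ)))
      (volume.restrict (unitCube d)) :=
    (integrable_const 1).indicator (nodeBox_meas d N k)
  calc ∫ x in unitCube d, LamFn d ((N:ℝ)⁻¹) k x
      ≤ ∫ x in unitCube d, (nodeBox d N k).indicator (fun _ => (1:ℝ)) x :=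
        integral_mono_of_nonneg
          (Filter.Eventually.of_forall fun x => LamFn_nonneg _ _ _ _) hind
          (Filter.Eventually.of_forall fun x => LamFn_le_indicator d N hN k x)
    _ = ∫ x in nodeBox d N k ∩ unitCube d, (1:ℝ) := by
        rw [integral_indicator (nodeBox_meas d N k), Measure.restrict_restrict (nodeBox_meas d N k)]
    _ = (volume (nodeBox d N k ∩ unitCube d)).toReal := by
        rw [setIntegral_const, smul_eq_mul, mul_one, measureReal_def]
    _ ≤ (volume (nodeBox d N k)).toReal := by
        apply ENNReal.toReal_mono
        · rw [nodeBox_vol d N]; exact ENNReal.pow_ne_top ENNReal.ofReal_ne_top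
        · exact measure_mono inter_subset_left
    _ = (2 * (N:ℝ)⁻¹) ^ d := by
        rw [nodeBox_vol d N, ENNReal.toReal_pow, ENNReal.toReal_ofReal (by positivity)]

lemma aux_Lam_integrable (d N : ℕ) (k : Fin d → ℕ) :
    Integrable (LamFn d ((N:ℝ)⁻¹) k) (volume.restrict (unitCube d)) := by
  have hfin : IsFiniteMeasure (volume.restrict (unitCube d)) := aux_finite d
  apply Integrable.mono' (integrable_const (1:ℝ))
    (LamFn_continuous d _ k).aestronglyMeasurable
  filter_upwards with x
  rw [Real.norm_eq_abs, abs_of_nonneg (LamFn_nonneg _ _ _ _)]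
  exact LamFn_le_one _ _ _ _

lemma aux_pointwise (d N : ℕ) (p : ℝ) (hp : 1 ≤ p) (w : (Fin d → ℝ) → ℝ) (x : Fin d → ℝ) :
    |interpQ d N w x| ^ p ≤
      ∑ k ∈ Finset.Icc (fun _ : Fin d => 1) (fun _ => N - 1),
        LamFn d ((N:ℝ)⁻¹) k x * |nodalW d ((N:ℝ)⁻¹) k w| ^ p := by
  have hp0 : 0 ≤ p := le_trans zero_le_one hp
  have h1 : |interpQ d N w x| ≤
      ∑ k ∈ Finset.Icc (fun _ : Fin d => 1) (fun _ => N - 1),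
        LamFn d ((N:ℝ)⁻¹) k x * |nodalW d ((N:ℝ)⁻¹) k w| := by
    calc |interpQ d N w x|
        ≤ ∑ k ∈ Finset.Icc (fun _ : Fin d => 1) (fun _ => N - 1),
            |nodalW d ((N:ℝ)⁻¹) k w * LamFn d ((N:ℝ)⁻¹) k x| :=
          Finset.abs_sum_le_sum_abs _ _
      _ = ∑ k ∈ Finset.Icc (fun _ : Fin d => 1) (fun _ => N - 1),
            LamFn d ((N:ℝ)⁻¹) k x * |nodalW d ((N:ℝ)⁻¹) k w| := by
          apply Finset.sum_congr rfl
          intro k _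
          rw [abs_mul, abs_of_nonneg (LamFn_nonneg _ _ _ _), mul_comm]
  have h2 := aux_jensen_wt (Finset.Icc (fun _ : Fin d => 1) (fun _ => N - 1))
    (fun k => LamFn d ((N:ℝ)⁻¹) k x) (fun k => |nodalW d ((N:ℝ)⁻¹) k w|) p hp
    (fun k _ => LamFn_nonneg _ _ _ _) (fun k _ => abs_nonneg _) (aux_Lam_sum d N x)
  calc |interpQ d N w x| ^ p
      ≤ (∑ k ∈ Finset.Icc (fun _ : Fin d => 1) (fun _ => N - 1),
          LamFn d ((N:ℝ)⁻¹) k x * |nodalW d ((N:ℝ)⁻¹) k w|) ^ p :=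
        Real.rpow_le_rpow (abs_nonneg _) h1 hp0
    _ ≤ _ := h2

end Aux

/-- `L^p` stability of the averaging interpolant: for `p ∈ [1,∞)`
there is `C = C(d, p)`, independent of `h = 1/N` and `w`, with
`∫_Ω |Π_h w|^p ≤ C ∫_Ω |w|^p`. -/
theorem statement13 (d : ℕ) (hd : 1 ≤ d) (p : ℝ) (hp : 1 ≤ p) :
    ∃ Cst : ℝ, 0 < Cst ∧
      ∀ (N : ℕ), 2 ≤ N →
        ∀ w : (Fin d → ℝ) → ℝ,
          MemLp w (ENNReal.ofReal p) (volume.restrict (unitCube d)) →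
          (∫ x in unitCube d, |interpQ d N w x| ^ p) ≤
            Cst * ∫ x in unitCube d, |w x| ^ p := by
  refine ⟨2 ^ d, by positivity, ?_⟩
  intro N hN w hmem
  have hfin : IsFiniteMeasure (volume.restrict (unitCube d)) := aux_finite d
  have hp0 : 0 < p := lt_of_lt_of_le one_pos hp
  have hN0 : (0:ℝ) < N := by positivity
  have hH0 : (0:ℝ) < (N:ℝ)⁻¹ := by positivity
  set S := Finset.Icc (fun _ : Fin d => 1) (fun _ : Fin d => N - 1) with hS
  -- integrability of w and |w|^p on Ω
  have hw1 : Integrable w (volume.restrict (unitCube d)) :=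
    hmem.integrable (ENNReal.one_le_ofReal.mpr hp)
  have hw2 : Integrable (fun x => |w x| ^ p) (volume.restrict (unitCube d)) := by
    have := hmem.integrable_norm_rpow (by simp [ENNReal.ofReal_eq_zero]; linarith)
      ENNReal.ofReal_ne_top
    simpa [Real.norm_eq_abs, ENNReal.toReal_ofReal (le_of_lt hp0)] using this
  -- integrability on each node cube
  have hwcube : ∀ k ∈ S, IntegrableOn w (nodeCube d ((N:ℝ)⁻¹) k) := by
    intro k hk
    exact hw1.mono_measure (Measure.restrict_mono (nodeCube_subset d N hN k hk) le_rfl)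
  have hwpcube : ∀ k ∈ S, IntegrableOn (fun x => |w x| ^ p) (nodeCube d ((N:ℝ)⁻¹) k) := by
    intro k hk
    exact hw2.mono_measure (Measure.restrict_mono (nodeCube_subset d N hN k hk) le_rfl)
  have hvol : ∀ k : Fin d → ℕ, volume (nodeCube d ((N:ℝ)⁻¹) k) =
      ENNReal.ofReal ((N:ℝ)⁻¹) ^ d := fun k => nodeCube_vol d _ hH0 k
  have hvolR : ∀ k : Fin d → ℕ, (volume (nodeCube d ((N:ℝ)⁻¹) k)).toReal = ((N:ℝ)⁻¹) ^ d := by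
    intro k
    rw [hvol k, ENNReal.toReal_pow, ENNReal.toReal_ofReal (le_of_lt hH0)]
  have hvol0 : ∀ k : Fin d → ℕ, volume (nodeCube d ((N:ℝ)⁻¹) k) ≠ 0 := by
    intro k
    rw [hvol k]
    simp only [ne_eq, pow_eq_zero_iff', ENNReal.ofReal_eq_zero, not_and_or, not_le]
    left; exact hH0
  have hvoltop : ∀ k : Fin d → ℕ, volume (nodeCube d ((N:ℝ)⁻¹) k) ≠ ⊤ := by
    intro k
    rw [hvol k]
    exact ENNReal.pow_ne_top ENNReal.ofReal_ne_top
  -- nodal value bound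
  have hW : ∀ k ∈ S, |nodalW d ((N:ℝ)⁻¹) k w| ^ p ≤
      (((N:ℝ)⁻¹) ^ d)⁻¹ * ∫ x in nodeCube d ((N:ℝ)⁻¹) k, |w x| ^ p := by
    intro k hk
    have := aux_avg_jensen (hvol0 k) (hvoltop k) p hp (hwcube k hk) (hwpcube k hk)
    rwa [hvolR k] at this
  -- integral of the pointwise bound
  have hIcube : ∀ k : Fin d → ℕ, 0 ≤ ∫ x in nodeCube d ((N:ℝ)⁻¹) k, |w x| ^ p := by
    intro k
    apply setIntegral_nonneg (nodeCube_meas d _ k)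
    intro x _
    positivity
  calc ∫ x in unitCube d, |interpQ d N w x| ^ p
      ≤ ∫ x in unitCube d, ∑ k ∈ S, LamFn d ((N:ℝ)⁻¹) k x * |nodalW d ((N:ℝ)⁻¹) k w| ^ p := by
        apply integral_mono_of_nonneg
        · filter_upwards with x; positivity
        · apply integrable_finset_sum
          intro k _
          exact (aux_Lam_integrable d N k).mul_const _
        · filter_upwards with x
          exact aux_pointwise d N p hp w x
    _ = ∑ k ∈ S, ∫ x in unitCube d, LamFn d ((N:ℝ)⁻¹) k x * |nodalW d ((N:ℝ)⁻¹) k w| ^ p := by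
        apply integral_finset_sum
        intro k _
        exact (aux_Lam_integrable d N k).mul_const _
    _ = ∑ k ∈ S, (∫ x in unitCube d, LamFn d ((N:ℝ)⁻¹) k x) * |nodalW d ((N:ℝ)⁻¹) k w| ^ p := by
        apply Finset.sum_congr rfl
        intro k _
        rw [integral_mul_const]
    _ ≤ ∑ k ∈ S, (2 * (N:ℝ)⁻¹) ^ d * |nodalW d ((N:ℝ)⁻¹) k w| ^ p := by
        apply Finset.sum_le_sum
        intro k _
        apply mul_le_mul_of_nonneg_right (aux_int_Lam d N (by omega) k)
          (Real.rpow_nonneg (abs_nonneg _) p)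
    _ ≤ ∑ k ∈ S, (2 * (N:ℝ)⁻¹) ^ d *
          ((((N:ℝ)⁻¹) ^ d)⁻¹ * ∫ x in nodeCube d ((N:ℝ)⁻¹) k, |w x| ^ p) := by
        apply Finset.sum_le_sum
        intro k hk
        exact mul_le_mul_of_nonneg_left (hW k hk) (by positivity)
    _ = 2 ^ d * ∑ k ∈ S, ∫ x in nodeCube d ((N:ℝ)⁻¹) k, |w x| ^ p := by
        rw [Finset.mul_sum]
        apply Finset.sum_congr rfl
        intro k _
        rw [mul_pow]
        have : ((N:ℝ)⁻¹ ^ d)⁻¹ * ((N:ℝ)⁻¹) ^ d = 1 := by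
          field_simp
        field_simp
    _ ≤ 2 ^ d * ∫ x in unitCube d, |w x| ^ p := by
        apply mul_le_mul_of_nonneg_left _ (by positivity)
        have hdisj : (S : Set (Fin d → ℕ)).Pairwise
            (Function.onFun Disjoint fun k => nodeCube d ((N:ℝ)⁻¹) k) := by
          intro k _ k' _ hkk
          exact nodeCube_disj d N hkk
        have hunion : ∑ k ∈ S, ∫ x in nodeCube d ((N:ℝ)⁻¹) k, |w x| ^ p
            = ∫ x in ⋃ k ∈ S, nodeCube d ((N:ℝ)⁻¹) k, |w x| ^ p := by
          rw [integral_biUnion_finset S (fun k _ => nodeCube_meas d _ k) hdisj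
            (fun k hk => hwpcube k hk)]
        rw [hunion]
        apply setIntegral_mono_set hw2
        · filter_upwards with x; positivity
        · apply HasSubset.Subset.eventuallyLE
          apply Set.iUnion₂_subset
          intro k hk
          exact nodeCube_subset d N hN k hk
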